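/- Let d be a positive natural number, k ≥ 0, σ > 0, and define f : EuclideanSpace ℝ (Fin d) → ℝ by f(x) = k·exp(−‖x‖²/σ²). Then f is differentiable everywhere, and for all x the operator norm of its derivative satisfies ‖Df(x)‖ = (2k·‖x‖/σ²)·exp(−‖x‖²/σ²) ≤ k·√2/(σ·√e), with equality at points with ‖x‖ = σ/√2. -/

import Mathlib

open Real

lemma key_exp_ineq (s : ℝ) : s * Real.exp 1 ≤ Real.exp s := by
  have h := Real.add_one_le_exp (s - 1)
  have h2 : Real.exp (s - 1) = Real.exp s / Real.exp 1 := Real.exp_sub s 1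
  have hpos : (0:ℝ) < Real.exp 1 := Real.exp_pos 1
  have h3 : s ≤ Real.exp s / Real.exp 1 := by rw [← h2]; linarith
  exact (le_div_iff₀ hpos).mp h3

lemma deriv_formula (d : ℕ) (k σ : ℝ) (hσ : 0 < σ)
    (x : EuclideanSpace ℝ (Fin d)) :
    HasFDerivAt (fun y : EuclideanSpace ℝ (Fin d) => k * Real.exp (-‖y‖ ^ 2 / σ ^ 2))
      (k • (Real.exp (-‖x‖ ^ 2 / σ ^ 2) • ((-1 / σ ^ 2) • (2 • innerSL ℝ x)))) x := by
  have h1 : HasFDerivAt (fun y : EuclideanSpace ℝ (Fin d) => ‖y‖ ^ 2)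
      (2 • innerSL ℝ x) x := (hasStrictFDerivAt_norm_sq x).hasFDerivAt
  have h2 : HasFDerivAt (fun y : EuclideanSpace ℝ (Fin d) => -‖y‖ ^ 2 / σ ^ 2)
      ((-1 / σ ^ 2) • (2 • innerSL ℝ x)) x := by
    have := h1.const_mul (-1 / σ ^ 2)
    refine this.congr_of_eventuallyEq (Filter.Eventually.of_forall fun y => ?_)
    ring
  have h3 := (Real.hasDerivAt_exp (-‖x‖ ^ 2 / σ ^ 2)).comp_hasFDerivAt x h2
  exact h3.const_mul k

theorem smooth_collision_energy_gradient_bound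
    (d : ℕ) (hd : 0 < d)
    (k σ : ℝ) (hk : 0 ≤ k) (hσ : 0 < σ)
    (f : EuclideanSpace ℝ (Fin d) → ℝ)
    (hf : ∀ x, f x = k * Real.exp (-‖x‖ ^ 2 / σ ^ 2)) :
    Differentiable ℝ f ∧
      (∀ x, ‖fderiv ℝ f x‖ = (2 * k * ‖x‖ / σ ^ 2) * Real.exp (-‖x‖ ^ 2 / σ ^ 2)) ∧
      (∀ x, ‖fderiv ℝ f x‖ ≤ k * Real.sqrt 2 / (σ * Real.sqrt (Real.exp 1))) ∧
      (∀ x, ‖x‖ = σ / Real.sqrt 2 →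
        ‖fderiv ℝ f x‖ = k * Real.sqrt 2 / (σ * Real.sqrt (Real.exp 1))) := by
  have hfe : f = fun y : EuclideanSpace ℝ (Fin d) => k * Real.exp (-‖y‖ ^ 2 / σ ^ 2) :=
    funext hf
  subst hfe
  have hD := fun x => deriv_formula d k σ hσ x
  have hnorm : ∀ x : EuclideanSpace ℝ (Fin d),
      ‖fderiv ℝ (fun y : EuclideanSpace ℝ (Fin d) => k * Real.exp (-‖y‖ ^ 2 / σ ^ 2)) x‖ =
        (2 * k * ‖x‖ / σ ^ 2) * Real.exp (-‖x‖ ^ 2 / σ ^ 2) := by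
    intro x
    rw [(hD x).fderiv]
    have h2s : (2:ℕ) • (innerSL ℝ) x = (2:ℝ) • (innerSL ℝ) x :=
      (two_smul ℕ ((innerSL ℝ) x)).trans (two_smul ℝ _).symm
    rw [h2s, norm_smul, norm_smul, norm_smul, norm_smul, innerSL_apply_norm]
    rw [Real.norm_eq_abs, Real.norm_eq_abs, Real.norm_eq_abs, Real.norm_eq_abs,
      abs_of_nonneg hk, abs_of_nonneg (Real.exp_pos _).le, abs_div, abs_neg, abs_one,
      abs_of_nonneg (by positivity : (0:ℝ) ≤ σ ^ 2), abs_of_nonneg (by norm_num : (0:ℝ) ≤ 2)]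
    ring
  refine ⟨fun x => (hD x).differentiableAt, hnorm, ?_, ?_⟩
  · intro x
    rw [hnorm x]
    set t := ‖x‖ with ht
    have ht0 : 0 ≤ t := norm_nonneg x
    have hB : 0 ≤ k * Real.sqrt 2 / (σ * Real.sqrt (Real.exp 1)) := by positivity
    refine le_of_pow_le_pow_left₀ two_ne_zero hB ?_
    have hsq2 : Real.sqrt 2 ^ 2 = 2 := Real.sq_sqrt (by norm_num)
    have hsqe : Real.sqrt (Real.exp 1) ^ 2 = Real.exp 1 := Real.sq_sqrt (Real.exp_pos 1).le
    have hkey := key_exp_ineq (2 * t ^ 2 / σ ^ 2)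
    set E := Real.exp (2 * t ^ 2 / σ ^ 2) with hE
    have hEpos : 0 < E := Real.exp_pos _
    have he1 : 0 < Real.exp 1 := Real.exp_pos 1
    have hmul : Real.exp (-t ^ 2 / σ ^ 2) ^ 2 = E⁻¹ := by
      rw [sq, ← Real.exp_add, hE, ← Real.exp_neg]
      congr 1
      ring
    have hA2 : (2 * k * t / σ ^ 2 * Real.exp (-t ^ 2 / σ ^ 2)) ^ 2
        = (2 * k ^ 2 / σ ^ 2) * ((2 * t ^ 2 / σ ^ 2) / E) := by
      rw [mul_pow, hmul]
      field_simp
    have hB2 : (k * Real.sqrt 2 / (σ * Real.sqrt (Real.exp 1))) ^ 2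
        = (2 * k ^ 2 / σ ^ 2) * (1 / Real.exp 1) := by
      rw [div_pow, mul_pow, mul_pow, hsq2, hsqe]
      field_simp
    rw [hA2, hB2]
    have hdiv : (2 * t ^ 2 / σ ^ 2) / E ≤ 1 / Real.exp 1 := by
      rw [div_le_div_iff₀ hEpos he1]
      linarith
    have hc : 0 ≤ 2 * k ^ 2 / σ ^ 2 := by positivity
    exact mul_le_mul_of_nonneg_left hdiv hc
  · intro x hx
    rw [hnorm x, hx]
    have hsq2 : Real.sqrt 2 * Real.sqrt 2 = 2 := Real.mul_self_sqrt (by norm_num)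
    have h2pos : (0:ℝ) < Real.sqrt 2 := by positivity
    have harg : -(σ / Real.sqrt 2) ^ 2 / σ ^ 2 = -(1/2) := by
      field_simp
      linear_combination hsq2
    rw [harg]
    have hexp : Real.exp (-(1/2)) = (Real.sqrt (Real.exp 1))⁻¹ := by
      rw [show Real.sqrt (Real.exp 1) = Real.exp (1/2) from (Real.exp_half 1).symm,
        ← Real.exp_neg]
    have hepos : (0:ℝ) < Real.sqrt (Real.exp 1) := by positivity
    rw [hexp]
    field_simp
    linear_combination (-k) * (Real.sq_sqrt (by norm_num : (0:ℝ) ≤ 2))
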